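/- arXiv:2003.11508 — 2 statements merged into one kernel-verified Lean document; each statement's English description precedes it below -/
import Mathlib

section
/- Let P ∈ ℂ[x] be a polynomial of degree n ≥ 1 that is real on the imaginary axis with P(it) > 0 for every t ∈ ℝ, and suppose that the polynomial x ↦ P(2x − 1) belongs to M and that 1/P(2x−1) has a good approximation. Then the regular bimodule 𝒜(P) is not unitarizable: no invariant Hermitian form on 𝒜(P) is positive definite. -/
open Polynomial
open scoped Classical

noncomputable section

abbrev FA : Type := FreeAlgebra ℂ (Fin 3)

def Egen : FA := FreeAlgebra.ι ℂ 0
def Fgen : FA := FreeAlgebra.ι ℂ 1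
def Hgen : FA := FreeAlgebra.ι ℂ 2

/-- The defining relations of the deformation `𝒜(P)` of the type A Kleinian singularity:
`he − eh = 2e`, `hf − fh = −2f`, `ef = P(h−1)`, `fe = P(h+1)`. -/
inductive ARel (P : ℂ[X]) : FA → FA → Prop
  | he : ARel P (Hgen * Egen - Egen * Hgen) (2 * Egen)
  | hf : ARel P (Hgen * Fgen - Fgen * Hgen) (-(2 * Fgen))
  | ef : ARel P (Egen * Fgen) (Polynomial.aeval (Hgen - 1) P)
  | fe : ARel P (Fgen * Egen) (Polynomial.aeval (Hgen + 1) P)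

/-- The algebra `𝒜(P)`. -/
abbrev AP (P : ℂ[X]) : Type := RingQuot (ARel P)

def eA (P : ℂ[X]) : AP P := RingQuot.mkAlgHom ℂ (ARel P) Egen
def fA (P : ℂ[X]) : AP P := RingQuot.mkAlgHom ℂ (ARel P) Fgen
def hA (P : ℂ[X]) : AP P := RingQuot.mkAlgHom ℂ (ARel P) Hgen

/-- `P` is real on the imaginary axis: `P(it) ∈ ℝ` for all real `t`. -/
def RealOnIm (P : ℂ[X]) : Prop := ∀ t : ℝ, ∃ r : ℝ, P.eval (Complex.I * t) = r

/-- An invariant Hermitian (sesquilinear) form on the regular bimodule `𝒜(P)`. -/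
structure InvForm (P : ℂ[X]) where
  B : AP P → AP P → ℂ
  add_left : ∀ u v w, B (u + v) w = B u w + B v w
  smul_left : ∀ (c : ℂ) (u v), B (c • u) v = c * B u v
  conj_symm : ∀ u v, B u v = starRingEnd ℂ (B v u)
  e_left : ∀ u v, B (eA P * u) v = - B u (v * fA P)
  h_left : ∀ u v, B (hA P * u) v = - B u (v * hA P)
  f_left : ∀ u v, B (fA P * u) v = - B u (v * eA P)
  e_right : ∀ u v, B (u * eA P) v = - B u (fA P * v)
  h_right : ∀ u v, B (u * hA P) v = - B u (hA P * v)
  f_right : ∀ u v, B (u * fA P) v = - B u (eA P * v)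

/-- The regular bimodule `𝒜(P)` is unitarizable: there is a positive definite
invariant Hermitian form on it. -/
def Unitarizable (P : ℂ[X]) : Prop :=
  ∃ Φ : InvForm P, ∀ u : AP P, u ≠ 0 → ∃ r : ℝ, 0 < r ∧ Φ.B u u = r


/-- The set `M` of nonzero polynomials that are real and nonnegative on the line
`Re x = 1/2`. -/
def MM : Set ℂ[X] :=
  {G | G ≠ 0 ∧ ∀ x : ℂ, x.re = 1 / 2 → ∃ r : ℝ, 0 ≤ r ∧ G.eval x = (r : ℂ)}

/-- `G` has `a`-bounded argument: `G(x) ≠ 0` and `arg G(x) ∈ (−a, a)` for all `x` on the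
imaginary axis. -/
def BoundedArg (G : ℂ[X]) (a : ℝ) : Prop :=
  ∀ x : ℂ, x.re = 0 → G.eval x ≠ 0 ∧ |(G.eval x).arg| < a

/-- `G` has `ε`-small argument: `arg G(x) ∈ (−ε, ε)` for all `x` on the imaginary axis with
`|x| < 1/ε`. -/
def SmallArg (G : ℂ[X]) (ε : ℝ) : Prop :=
  ∀ x : ℂ, x.re = 0 → ‖x‖ < 1 / ε → |(G.eval x).arg| < ε

/-- `1/G` has a good approximation: there is `0 < a < π/2` such that for every `ε > 0` there
is `F ∈ M` for which `G·F` has `a`-bounded `ε`-small argument. -/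
def GoodApprox (G : ℂ[X]) : Prop :=
  ∃ a : ℝ, 0 < a ∧ a < Real.pi / 2 ∧
    ∀ ε : ℝ, 0 < ε →
      ∃ F ∈ MM, BoundedArg (G * F) a ∧ SmallArg (G * F) ε



section Aux
open Complex

lemma conj_eval (S : ℂ[X]) (x : ℂ) :
    (starRingEnd ℂ) (S.eval x) = (S.map (starRingEnd ℂ)).eval ((starRingEnd ℂ) x) := by
  rw [Polynomial.eval_map]
  rw [show S.eval x = Polynomial.eval₂ (RingHom.id ℂ) x S by rfl]
  rw [Polynomial.hom_eval₂]
  rfl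

lemma sos_real_aux : ∀ (n : ℕ) (p : ℝ[X]), p.natDegree ≤ n → (∀ s : ℝ, 0 ≤ p.eval s) →
    ∃ q₁ q₂ : ℝ[X], p = q₁ ^ 2 + q₂ ^ 2 := by
  intro n
  induction n with
  | zero =>
    intro p hdeg hpos
    obtain ⟨a, rfl⟩ : ∃ a, p = C a :=
      ⟨_, Polynomial.eq_C_of_natDegree_eq_zero (Nat.le_zero.mp hdeg)⟩
    have h0 : 0 ≤ a := by simpa using hpos 0
    exact ⟨C (Real.sqrt a), 0, by rw [← Polynomial.C_pow, Real.sq_sqrt h0]; ring⟩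
  | succ n IH =>
    intro p hdeg hpos
    rcases le_or_gt p.natDegree n with hle | hgt
    · exact IH p hle hpos
    have hdeg1 : p.natDegree = n + 1 := le_antisymm hdeg hgt
    have hp0 : p ≠ 0 := fun h => by simp [h] at hdeg1
    have hdegpos : 0 < (p.map (algebraMap ℝ ℂ)).degree := by
      rw [Polynomial.degree_map_eq_of_injective (algebraMap ℝ ℂ).injective]
      exact Polynomial.natDegree_pos_iff_degree_pos.mp (by omega)
    obtain ⟨z, hz⟩ := Complex.exists_root hdegpos
    have hzeval : Polynomial.aeval z p = 0 := by
      rwa [Polynomial.aeval_def, ← Polynomial.eval_map]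
    rcases eq_or_ne z.im 0 with him | him
    · -- real root
      set r := z.re with hr
      have hzr : z = (r : ℂ) := Complex.ext rfl him
      have hroot : p.eval r = 0 := by
        have h2 : (algebraMap ℝ ℂ) (p.eval r) = 0 := by
          rw [← Polynomial.eval₂_at_apply, ← Polynomial.eval_map]
          rw [Polynomial.IsRoot] at hz
          rw [show (algebraMap ℝ ℂ) r = z by rw [hzr]; rfl]
          exact hz
        exact Complex.ofReal_eq_zero.mp h2
      have hderiv : p.derivative.eval r = 0 := by
        have hlm : IsLocalMin (fun s => p.eval s) r := by
          apply Filter.Eventually.of_forall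
          intro s; simpa [hroot] using hpos s
        have := hlm.deriv_eq_zero
        rwa [Polynomial.deriv] at this
      obtain ⟨p₁, hp₁⟩ := Polynomial.dvd_iff_isRoot.mpr hroot
      have hp₁root : p₁.eval r = 0 := by
        have hd : p.derivative = p₁ + (X - C r) * p₁.derivative := by
          rw [hp₁, Polynomial.derivative_mul]
          simp
        have := hderiv
        rw [hd] at this
        simpa using this
      obtain ⟨p₂, hp₂⟩ := Polynomial.dvd_iff_isRoot.mpr hp₁root
      have hfac : p = (X - C r) ^ 2 * p₂ := by rw [hp₁, hp₂]; ring
      have hp₂0 : p₂ ≠ 0 := fun h => hp0 (by rw [hfac, h, mul_zero])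
      have haux : ∀ s : ℝ, s ≠ r → 0 ≤ p₂.eval s := by
        intro s hs
        have h1 : 0 ≤ (s - r) ^ 2 * p₂.eval s := by
          have := hpos s
          rwa [hfac, Polynomial.eval_mul, Polynomial.eval_pow, Polynomial.eval_sub,
            Polynomial.eval_X, Polynomial.eval_C] at this
        have h2 : 0 < (s - r) ^ 2 := by
          have : s - r ≠ 0 := sub_ne_zero.mpr hs
          positivity
        nlinarith
      have hlimr : 0 ≤ p₂.eval r := by
        have htend : Filter.Tendsto (fun u => p₂.eval u) (nhdsWithin r {r}ᶜ) (nhds (p₂.eval r)) :=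
          (p₂.continuousAt).continuousWithinAt
        refine ge_of_tendsto htend ?_
        filter_upwards [self_mem_nhdsWithin] with u hu
        exact haux u hu
      have hpos₂ : ∀ s : ℝ, 0 ≤ p₂.eval s := by
        intro s
        rcases eq_or_ne s r with h | h
        · rw [h]; exact hlimr
        · exact haux s h
      have hdeg₂ : p₂.natDegree ≤ n := by
        have hXr : ((X - C r : ℝ[X]) ^ 2) ≠ 0 := pow_ne_zero _ (Polynomial.X_sub_C_ne_zero r)
        have : p.natDegree = 2 + p₂.natDegree := by
          rw [hfac, Polynomial.natDegree_mul hXr hp₂0]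
          simp [Polynomial.natDegree_pow]
        omega
      obtain ⟨q₁, q₂, hq⟩ := IH p₂ (by omega) hpos₂
      refine ⟨(X - C r) * q₁, (X - C r) * q₂, ?_⟩
      rw [hfac, hq]; ring
    · -- complex root
      obtain ⟨p₂, hp₂⟩ := Polynomial.quadratic_dvd_of_aeval_eq_zero_im_ne_zero p hzeval him
      set d : ℝ[X] := X ^ 2 - C (2 * z.re) * X + C (‖z‖ ^ 2) with hd
      have hnorm : ‖z‖ ^ 2 = z.re ^ 2 + z.im ^ 2 := by
        rw [Complex.sq_norm, Complex.normSq_apply]; ring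
      have hdeval : ∀ s : ℝ, d.eval s = (s - z.re) ^ 2 + z.im ^ 2 := by
        intro s
        simp only [hd, Polynomial.eval_add, Polynomial.eval_sub, Polynomial.eval_mul,
          Polynomial.eval_pow, Polynomial.eval_X, Polynomial.eval_C]
        rw [hnorm]; ring
      have hdpos : ∀ s : ℝ, 0 < d.eval s := by
        intro s
        rw [hdeval s]
        have h2 : 0 < z.im ^ 2 := by positivity
        nlinarith [sq_nonneg (s - z.re)]
      have hp₂0 : p₂ ≠ 0 := fun h => hp0 (by rw [hp₂, h, mul_zero])
      have hpos₂ : ∀ s : ℝ, 0 ≤ p₂.eval s := by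
        intro s
        have h1 : 0 ≤ d.eval s * p₂.eval s := by
          have := hpos s; rwa [hp₂, Polynomial.eval_mul] at this
        nlinarith [hdpos s]
      have hddeg : d.natDegree = 2 := by
        rw [hd]; compute_degree!
      have hdeg₂ : p₂.natDegree ≤ n := by
        have hd0 : d ≠ 0 := fun h => by simp [h] at hddeg
        have : p.natDegree = 2 + p₂.natDegree := by
          rw [hp₂, Polynomial.natDegree_mul hd0 hp₂0, hddeg]
        omega
      obtain ⟨q₁, q₂, hq⟩ := IH p₂ (by omega) hpos₂
      have hdsq : d = (X - C z.re) ^ 2 + (C z.im) ^ 2 := by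
        have h2 : (C (2:ℝ) : ℝ[X]) = 2 := map_ofNat C 2
        rw [hd, hnorm]
        simp only [Polynomial.C_add, Polynomial.C_mul, Polynomial.C_pow, h2]
        ring
      refine ⟨(X - C z.re) * q₁ - C z.im * q₂, (X - C z.re) * q₂ + C z.im * q₁, ?_⟩
      rw [hp₂, hq, hdsq]; ring

lemma sos_real (p : ℝ[X]) (hpos : ∀ s : ℝ, 0 ≤ p.eval s) :
    ∃ q₁ q₂ : ℝ[X], p = q₁ ^ 2 + q₂ ^ 2 :=
  sos_real_aux p.natDegree p le_rfl hpos

def Sig (S : ℂ[X]) : ℂ[X] := (S.map (starRingEnd ℂ)).comp (-X)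

lemma Sig_eval (S : ℂ[X]) (x : ℂ) :
    (Sig S).eval x = (starRingEnd ℂ) (S.eval (-((starRingEnd ℂ) x))) := by
  rw [Sig, Polynomial.eval_comp, Polynomial.eval_neg, Polynomial.eval_X,
    conj_eval S (-((starRingEnd ℂ) x))]
  simp

lemma Sig_add (S T : ℂ[X]) : Sig (S + T) = Sig S + Sig T := by
  simp [Sig, Polynomial.add_comp]

lemma Sig_mul (S T : ℂ[X]) : Sig (S * T) = Sig S * Sig T := by
  simp [Sig, Polynomial.mul_comp]

lemma Sig_monomial (n : ℕ) (a : ℂ) :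
    Sig (Polynomial.monomial n a) = Polynomial.C ((-1)^n * (starRingEnd ℂ) a) * X ^ n := by
  rw [Sig, Polynomial.map_monomial, ← Polynomial.C_mul_X_pow_eq_monomial]
  simp only [Polynomial.mul_comp, Polynomial.C_comp, Polynomial.pow_comp, Polynomial.X_comp]
  rw [neg_pow, Polynomial.C_mul, map_pow, map_neg, Polynomial.C_1]
  ring

lemma eval_real_map (q : ℝ[X]) (s : ℝ) :
    (q.map (algebraMap ℝ ℂ)).eval ((s:ℂ)) = ((q.eval s : ℝ) : ℂ) := by
  rw [Polynomial.eval_map]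
  exact Polynomial.eval₂_at_apply (algebraMap ℝ ℂ) s

lemma line_infinite (c : ℝ) : {x : ℂ | ∃ s : ℝ, x = (c:ℂ) + Complex.I * s}.Infinite := by
  refine Set.infinite_of_injective_forall_mem (f := fun s : ℝ => (c:ℂ) + Complex.I * s) ?_ ?_
  · intro a b hab
    simp only at hab
    have := congrArg Complex.im hab
    simpa using this
  · intro s; exact ⟨s, rfl⟩

lemma sos_on_line (c : ℝ) (T : ℂ[X])
    (h : ∀ s : ℝ, ∃ r : ℝ, 0 ≤ r ∧ T.eval ((c:ℂ) + Complex.I * s) = r) :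
    ∃ q₁ q₂ : ℝ[X], ∀ s : ℝ,
      T.eval ((c:ℂ) + Complex.I * s) = ((q₁.eval s : ℝ) : ℂ)^2 + ((q₂.eval s : ℝ) : ℂ)^2 := by
  set T' : ℂ[X] := T.comp (Polynomial.C (c:ℂ) + Polynomial.C Complex.I * X) with hT'def
  have hT' : ∀ s : ℂ, T'.eval s = T.eval ((c:ℂ) + Complex.I * s) := by
    intro s; simp [hT'def, Polynomial.eval_comp]
  have hreal : ∀ s : ℝ, ∃ r : ℝ, 0 ≤ r ∧ T'.eval (s:ℂ) = r := by
    intro s; rw [hT']; exact h s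
  -- T' has real coefficients
  have hconj : T'.map (starRingEnd ℂ) = T' := by
    apply Polynomial.eq_of_infinite_eval_eq
    apply Set.Infinite.mono ?_ (Set.infinite_range_of_injective Complex.ofReal_injective)
    rintro x ⟨s, rfl⟩
    obtain ⟨r, _, hr⟩ := hreal s
    show (T'.map (starRingEnd ℂ)).eval _ = _
    have h1 := conj_eval T' ((s:ℂ))
    rw [Complex.conj_ofReal] at h1
    rw [← h1, hr]
    simp
  have hcoeff : ∀ k, ((T'.coeff k).re : ℂ) = T'.coeff k := by
    intro k
    have : (starRingEnd ℂ) (T'.coeff k) = T'.coeff k := by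
      conv_rhs => rw [← hconj]
      rw [Polynomial.coeff_map]
    have him : (T'.coeff k).im = 0 := by
      have := congrArg Complex.im this
      simp at this
      linarith
    exact Complex.ext rfl him.symm
  -- build the real polynomial
  set p : ℝ[X] := ⟨.ofCoeff (T'.toFinsupp.coeff.mapRange Complex.re Complex.zero_re)⟩ with hpdef
  have hpcoeff : ∀ k, p.coeff k = (T'.coeff k).re := by
    intro k
    rw [hpdef]; rfl
  have hpmap : p.map (algebraMap ℝ ℂ) = T' := by
    apply Polynomial.ext
    intro k
    rw [Polynomial.coeff_map, hpcoeff]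
    exact hcoeff k
  have hppos : ∀ s : ℝ, 0 ≤ p.eval s := by
    intro s
    obtain ⟨r, hr0, hr⟩ := hreal s
    have : ((p.eval s : ℝ) : ℂ) = (r : ℂ) := by
      rw [← eval_real_map, hpmap, hr]
    rw [Complex.ofReal_inj] at this
    rw [this]; exact hr0
  obtain ⟨q₁, q₂, hq⟩ := sos_real p hppos
  refine ⟨q₁, q₂, fun s => ?_⟩
  rw [← hT']
  rw [← hpmap, eval_real_map, hq]
  simp [Polynomial.eval_add, Polynomial.eval_pow]

lemma mul_conj_form (a b : ℂ) : (a + Complex.I * b) * (a - Complex.I * b) = a^2 + b^2 := by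
  ring_nf
  rw [Complex.I_sq]
  ring

lemma axis_factor (V : ℂ[X]) (h : ∀ s : ℝ, ∃ r : ℝ, 0 ≤ r ∧ V.eval (Complex.I * s) = r) :
    ∃ Q : ℂ[X], V = Q * Sig Q := by
  obtain ⟨q₁, q₂, hq⟩ := sos_on_line 0 V (by intro s; simpa using h s)
  set A : ℂ[X] := q₁.map (algebraMap ℝ ℂ) + Polynomial.C Complex.I * q₂.map (algebraMap ℝ ℂ)
    with hA
  have hAeval : ∀ s : ℝ, A.eval (s:ℂ) =
      ((q₁.eval s : ℝ) : ℂ) + Complex.I * ((q₂.eval s : ℝ) : ℂ) := by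
    intro s
    simp only [hA, Polynomial.eval_add, Polynomial.eval_mul, Polynomial.eval_C, eval_real_map]
  refine ⟨A.comp (Polynomial.C (-Complex.I) * X), ?_⟩
  apply Polynomial.eq_of_infinite_eval_eq
  apply Set.Infinite.mono ?_ (line_infinite 0)
  rintro x ⟨s, rfl⟩
  show V.eval _ = _
  have harg : -Complex.I * (((0:ℝ):ℂ) + Complex.I * s) = ((s:ℝ):ℂ) := by
    push_cast; ring_nf; rw [Complex.I_sq]; ring
  have hconjx : -((starRingEnd ℂ) (((0:ℝ):ℂ) + Complex.I * s)) = ((0:ℝ):ℂ) + Complex.I * s := by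
    simp [Complex.ext_iff]
  rw [Polynomial.eval_mul, Polynomial.eval_comp, Sig_eval, hconjx, Polynomial.eval_comp]
  simp only [Polynomial.eval_mul, Polynomial.eval_C, Polynomial.eval_X]
  rw [harg, hAeval s, hq s]
  rw [map_add, map_mul]
  simp only [Complex.conj_ofReal, Complex.conj_I]
  rw [show ((q₁.eval s : ℝ) : ℂ) + -Complex.I * ((q₂.eval s : ℝ) : ℂ)
      = ((q₁.eval s : ℝ) : ℂ) - Complex.I * ((q₂.eval s : ℝ) : ℂ) by ring]
  rw [mul_conj_form]

lemma halfline_factor (F : ℂ[X])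
    (h : ∀ s : ℝ, ∃ r : ℝ, 0 ≤ r ∧ F.eval (((1/2 : ℝ):ℂ) + Complex.I * s) = r) :
    ∃ S : ℂ[X], S.comp (X - Polynomial.C 2) * Sig S = F.comp (Polynomial.C (2⁻¹ : ℂ) * X) := by
  obtain ⟨q₁, q₂, hq⟩ := sos_on_line (1/2) F h
  set A : ℂ[X] := q₁.map (algebraMap ℝ ℂ) + Polynomial.C Complex.I * q₂.map (algebraMap ℝ ℂ)
    with hA
  have hAeval : ∀ s : ℝ, A.eval (s:ℂ) =
      ((q₁.eval s : ℝ) : ℂ) + Complex.I * ((q₂.eval s : ℝ) : ℂ) := by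
    intro s
    simp only [hA, Polynomial.eval_add, Polynomial.eval_mul, Polynomial.eval_C, eval_real_map]
  refine ⟨A.comp (Polynomial.C (-Complex.I/2) * X + Polynomial.C (-Complex.I/2)), ?_⟩
  apply Polynomial.eq_of_infinite_eval_eq
  apply Set.Infinite.mono ?_ (line_infinite 1)
  rintro x ⟨s, rfl⟩
  show _ = _
  have harg1 : -Complex.I/2 * ((((1:ℝ):ℂ) + Complex.I * s) - 2) + -Complex.I/2
      = ((s/2 : ℝ) : ℂ) := by
    push_cast; ring_nf; rw [Complex.I_sq]; ring
  have harg2 : -Complex.I/2 * (-((starRingEnd ℂ) (((1:ℝ):ℂ) + Complex.I * s))) + -Complex.I/2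
      = ((s/2 : ℝ) : ℂ) := by
    rw [map_add, map_mul]
    simp only [Complex.conj_ofReal, Complex.conj_I]
    push_cast; ring_nf; rw [Complex.I_sq]; ring
  have hhalf : (2⁻¹ : ℂ) * (((1:ℝ):ℂ) + Complex.I * s) = ((1/2:ℝ):ℂ) + Complex.I * ((s/2 : ℝ):ℂ) := by
    push_cast; ring
  set x : ℂ := ((1:ℝ):ℂ) + Complex.I * s with hxdef
  have e1 : ((A.comp (Polynomial.C (-Complex.I/2) * X + Polynomial.C (-Complex.I/2))).comp
      (X - Polynomial.C 2)).eval x = A.eval ((s/2 : ℝ):ℂ) := by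
    simp only [Polynomial.eval_comp, Polynomial.eval_add, Polynomial.eval_mul,
      Polynomial.eval_sub, Polynomial.eval_C, Polynomial.eval_X]
    rw [← harg1]
  have e2 : (Sig (A.comp (Polynomial.C (-Complex.I/2) * X + Polynomial.C (-Complex.I/2)))).eval x
      = (starRingEnd ℂ) (A.eval ((s/2 : ℝ):ℂ)) := by
    rw [Sig_eval]
    congr 1
    simp only [Polynomial.eval_comp, Polynomial.eval_add, Polynomial.eval_mul,
      Polynomial.eval_C, Polynomial.eval_X]
    rw [← harg2]
  have e3 : (F.comp (Polynomial.C (2⁻¹:ℂ) * X)).eval x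
      = ((q₁.eval (s/2) : ℝ) : ℂ)^2 + ((q₂.eval (s/2) : ℝ) : ℂ)^2 := by
    simp only [Polynomial.eval_comp, Polynomial.eval_mul, Polynomial.eval_C, Polynomial.eval_X]
    rw [hhalf, hq (s/2)]
  rw [Polynomial.eval_mul, e1, e2, e3, hAeval (s/2)]
  rw [map_add, map_mul]
  simp only [Complex.conj_ofReal, Complex.conj_I]
  rw [show ((q₁.eval (s/2) : ℝ) : ℂ) + -Complex.I * ((q₂.eval (s/2) : ℝ) : ℂ)
      = ((q₁.eval (s/2) : ℝ) : ℂ) - Complex.I * ((q₂.eval (s/2) : ℝ) : ℂ) by ring]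
  rw [mul_conj_form]

-- ### representation on ℕ →₀ ℂ

abbrev VS : Type := ℕ →₀ ℂ

def HopF (lam : ℂ) : ℕ → VS := fun k => (lam - 2*k) • Finsupp.single k 1
def FopF : ℕ → VS := fun k => Finsupp.single (k+1) 1
def EopF (P : ℂ[X]) (lam : ℂ) : ℕ → VS := fun k =>
  match k with
  | 0 => 0
  | (j+1) => P.eval (lam - 2*j - 1) • Finsupp.single j 1

def Hop (lam : ℂ) : Module.End ℂ VS := Finsupp.lift VS ℂ ℕ (HopF lam)
def Fop : Module.End ℂ VS := Finsupp.lift VS ℂ ℕ FopF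
def Eop (P : ℂ[X]) (lam : ℂ) : Module.End ℂ VS := Finsupp.lift VS ℂ ℕ (EopF P lam)

lemma lift_single (f : ℕ → VS) (k : ℕ) (b : ℂ) :
    (Finsupp.lift VS ℂ ℕ f) (Finsupp.single k b) = b • f k := by
  rw [Finsupp.lift_apply, Finsupp.sum_single_index]
  simp

lemma Hop_single (lam : ℂ) (k : ℕ) (b : ℂ) :
    Hop lam (Finsupp.single k b) = ((lam - 2*k) * b) • Finsupp.single k 1 := by
  rw [Hop, lift_single, HopF, smul_smul, mul_comm]

lemma Fop_single (k : ℕ) (b : ℂ) :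
    Fop (Finsupp.single k b) = b • Finsupp.single (k+1) 1 := by
  rw [Fop, lift_single, FopF]

lemma Eop_single_zero (P : ℂ[X]) (lam : ℂ) (b : ℂ) :
    Eop P lam (Finsupp.single 0 b) = 0 := by
  rw [Eop, lift_single]
  show b • (0 : VS) = 0
  simp

lemma Eop_single_succ (P : ℂ[X]) (lam : ℂ) (j : ℕ) (b : ℂ) :
    Eop P lam (Finsupp.single (j+1) b) = (P.eval (lam - 2*j - 1) * b) • Finsupp.single j 1 := by
  rw [Eop, lift_single]
  show b • (P.eval (lam - 2*j - 1) • Finsupp.single j 1) = _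
  rw [smul_smul, mul_comm]

lemma aeval_eig {T : Module.End ℂ VS} {v : VS} {μ : ℂ} (hv : T v = μ • v) (S : ℂ[X]) :
    (Polynomial.aeval T S) v = S.eval μ • v := by
  induction S using Polynomial.induction_on' with
  | add p q hp hq =>
    rw [map_add, LinearMap.add_apply, hp, hq, Polynomial.eval_add, add_smul]
  | monomial n a =>
    have hpow : ∀ m : ℕ, (T^m) v = μ^m • v := by
      intro m
      induction m with
      | zero => simp
      | succ m ih =>
        rw [pow_succ', Module.End.mul_apply, ih, map_smul, hv, smul_smul, ← pow_succ]
    rw [Polynomial.aeval_monomial, Polynomial.eval_monomial]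
    rw [Module.End.mul_apply, hpow, map_smul]
    rw [Algebra.algebraMap_eq_smul_one, LinearMap.smul_apply, Module.End.one_apply]
    module

-- relations
lemma relH_E (P : ℂ[X]) (lam : ℂ) :
    Hop lam * Eop P lam - Eop P lam * Hop lam = (2:ℂ) • Eop P lam := by
  apply Finsupp.lhom_ext
  intro k b
  rcases k with _ | j
  · rw [LinearMap.sub_apply, Module.End.mul_apply, Module.End.mul_apply,
      Eop_single_zero, map_zero, Hop_single, map_smul, Eop_single_zero, smul_zero,
      sub_zero, LinearMap.smul_apply, Eop_single_zero, smul_zero]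
  · have h1 : (Hop lam) ((Eop P lam) (Finsupp.single (j+1) b))
        = ((lam - 2*j) * (P.eval (lam - 2*j - 1) * b)) • Finsupp.single j 1 := by
      rw [Eop_single_succ, map_smul, Hop_single, smul_smul]
      congr 1; ring
    have h2 : (Eop P lam) ((Hop lam) (Finsupp.single (j+1) b))
        = ((lam - 2*(j+1)) * (P.eval (lam - 2*j - 1) * b)) • Finsupp.single j 1 := by
      rw [Hop_single, map_smul, Eop_single_succ, smul_smul]
      congr 1; push_cast; ring
    rw [LinearMap.sub_apply, Module.End.mul_apply, Module.End.mul_apply, h1, h2,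
      LinearMap.smul_apply, Eop_single_succ, smul_smul, ← sub_smul]
    congr 1; push_cast; ring

lemma relH_F (P : ℂ[X]) (lam : ℂ) :
    Hop lam * Fop - Fop * Hop lam = (-2:ℂ) • Fop := by
  apply Finsupp.lhom_ext
  intro k b
  have h1 : (Hop lam) (Fop (Finsupp.single k b))
      = ((lam - 2*(k+1)) * b) • Finsupp.single (k+1) 1 := by
    rw [Fop_single, map_smul, Hop_single, smul_smul]
    congr 1; push_cast; ring
  have h2 : Fop ((Hop lam) (Finsupp.single k b))
      = ((lam - 2*k) * b) • Finsupp.single (k+1) 1 := by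
    rw [Hop_single, map_smul, Fop_single, smul_smul]
    congr 1; ring
  rw [LinearMap.sub_apply, Module.End.mul_apply, Module.End.mul_apply, h1, h2,
    LinearMap.smul_apply, Fop_single, smul_smul, ← sub_smul]
  congr 1; push_cast; ring

lemma single_eq_smul (k : ℕ) (b : ℂ) :
    Finsupp.single k b = b • Finsupp.single k (1:ℂ) := by
  rw [Finsupp.smul_single, smul_eq_mul, mul_one]

lemma relEF (P : ℂ[X]) (lam : ℂ) :
    Eop P lam * Fop = Polynomial.aeval (Hop lam - 1) P := by
  apply Finsupp.lhom_ext
  intro k b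
  have heig : (Hop lam - 1) (Finsupp.single k b) = (lam - 2*k - 1) • Finsupp.single k b := by
    rw [LinearMap.sub_apply, Module.End.one_apply, Hop_single, single_eq_smul k b]
    module
  rw [Module.End.mul_apply, Fop_single, map_smul, Eop_single_succ, aeval_eig heig]
  rw [single_eq_smul k b]
  module

lemma relFE (P : ℂ[X]) (lam : ℂ) (hroot : P.eval (lam + 1) = 0) :
    Fop * Eop P lam = Polynomial.aeval (Hop lam + 1) P := by
  apply Finsupp.lhom_ext
  intro k b
  have heig : (Hop lam + 1) (Finsupp.single k b) = (lam - 2*k + 1) • Finsupp.single k b := by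
    rw [LinearMap.add_apply, Module.End.one_apply, Hop_single, single_eq_smul k b]
    module
  rw [Module.End.mul_apply, aeval_eig heig]
  rcases k with _ | j
  · rw [Eop_single_zero, map_zero]
    rw [show lam - 2*((0:ℕ):ℂ) + 1 = lam + 1 by push_cast; ring, hroot]
    simp
  · rw [Eop_single_succ, map_smul, Fop_single, single_eq_smul (j+1) b,
      show lam - 2*(((j+1:ℕ)):ℂ) + 1 = lam - 2*(j:ℂ) - 1 by push_cast; ring]
    module

-- the algebra hom
def repAlgHom (P : ℂ[X]) (lam : ℂ) : FA →ₐ[ℂ] Module.End ℂ VS :=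
  FreeAlgebra.lift ℂ (![Eop P lam, Fop, Hop lam])

lemma repAlgHom_E (P : ℂ[X]) (lam : ℂ) : repAlgHom P lam Egen = Eop P lam := by
  rw [repAlgHom, Egen, FreeAlgebra.lift_ι_apply]; rfl
lemma repAlgHom_F (P : ℂ[X]) (lam : ℂ) : repAlgHom P lam Fgen = Fop := by
  rw [repAlgHom, Fgen, FreeAlgebra.lift_ι_apply]; rfl
lemma repAlgHom_H (P : ℂ[X]) (lam : ℂ) : repAlgHom P lam Hgen = Hop lam := by
  rw [repAlgHom, Hgen, FreeAlgebra.lift_ι_apply]; rfl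

lemma repAlgHom_rel (P : ℂ[X]) (lam : ℂ) (hroot : P.eval (lam + 1) = 0) :
    ∀ ⦃x y : FA⦄, ARel P x y → repAlgHom P lam x = repAlgHom P lam y := by
  intro x y h
  have h2 : (repAlgHom P lam) (2 : FA) = (2 : Module.End ℂ VS) := by
    rw [show ((2:FA)) = ((1:FA) + 1) by norm_num, map_add, map_one]
    norm_num
  induction h with
  | he =>
    rw [map_sub, map_mul, map_mul, map_mul, repAlgHom_E, repAlgHom_H, h2]
    rw [relH_E P lam, two_mul, two_smul]
  | hf =>
    rw [map_sub, map_mul, map_mul, map_neg, map_mul, repAlgHom_F, repAlgHom_H, h2]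
    rw [relH_F P lam, two_mul]
    module
  | ef =>
    rw [map_mul, repAlgHom_E, repAlgHom_F]
    rw [← Polynomial.aeval_algHom_apply]
    rw [map_sub, repAlgHom_H, map_one]
    exact relEF P lam
  | fe =>
    rw [map_mul, repAlgHom_E, repAlgHom_F]
    rw [← Polynomial.aeval_algHom_apply]
    rw [map_add, repAlgHom_H, map_one]
    exact relFE P lam hroot

def repQuot (P : ℂ[X]) (lam : ℂ) (hroot : P.eval (lam + 1) = 0) :
    AP P →ₐ[ℂ] Module.End ℂ VS :=
  RingQuot.liftAlgHom ℂ ⟨repAlgHom P lam, repAlgHom_rel P lam hroot⟩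

lemma one_ne_zero_AP (P : ℂ[X]) (hdeg : 1 ≤ P.natDegree) : (1 : AP P) ≠ 0 := by
  have hdegpos : 0 < P.degree := Polynomial.natDegree_pos_iff_degree_pos.mp hdeg
  obtain ⟨z, hz⟩ := Complex.exists_root hdegpos
  have hroot : P.eval ((z - 1) + 1) = 0 := by
    rw [sub_add_cancel]; exact hz
  intro h1
  have := congrArg (repQuot P (z-1) hroot) h1
  rw [map_one, map_zero] at this
  have h2 := congrArg (fun T : Module.End ℂ VS => T (Finsupp.single 0 1)) this
  simp only [Module.End.one_apply, LinearMap.zero_apply] at h2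
  exact one_ne_zero (Finsupp.single_eq_zero.mp h2)

-- ### AP relations

lemma hA_eA (P : ℂ[X]) : hA P * eA P - eA P * hA P = 2 * eA P := by
  have h := RingQuot.mkAlgHom_rel ℂ (ARel.he (P := P))
  rw [map_sub, map_mul, map_mul, map_mul, map_ofNat] at h
  exact h

lemma eA_hA (P : ℂ[X]) : eA P * hA P = (hA P - 2) * eA P := by
  have h := hA_eA P
  calc eA P * hA P = hA P * eA P - (hA P * eA P - eA P * hA P) := by noncomm_ring
  _ = hA P * eA P - 2 * eA P := by rw [h]
  _ = (hA P - 2) * eA P := by rw [sub_mul]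

def chi (P : ℂ[X]) (S : ℂ[X]) : AP P := Polynomial.aeval (hA P) S

lemma chi_add (P : ℂ[X]) (S T : ℂ[X]) : chi P (S + T) = chi P S + chi P T := by
  rw [chi, chi, chi, map_add]

lemma chi_mul (P : ℂ[X]) (S T : ℂ[X]) : chi P (S * T) = chi P S * chi P T := by
  rw [chi, chi, chi, map_mul]

lemma chi_one (P : ℂ[X]) : chi P 1 = 1 := by rw [chi, map_one]

lemma chi_C (P : ℂ[X]) (z : ℂ) : chi P (Polynomial.C z) = z • (1 : AP P) := by
  rw [chi, Polynomial.aeval_C, Algebra.algebraMap_eq_smul_one]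

lemma eA_pow (P : ℂ[X]) (n : ℕ) : eA P * hA P ^ n = (hA P - 2) ^ n * eA P := by
  induction n with
  | zero => simp
  | succ n ih =>
    rw [pow_succ, ← mul_assoc, ih, mul_assoc, eA_hA, ← mul_assoc, ← pow_succ]

lemma chi_sub2 (P : ℂ[X]) (S : ℂ[X]) :
    chi P (S.comp (X - Polynomial.C 2)) = Polynomial.aeval (hA P - 2) S := by
  rw [chi, Polynomial.aeval_comp]
  congr 1
  rw [map_sub, Polynomial.aeval_X, Polynomial.aeval_C, map_ofNat]

lemma eA_chi (P : ℂ[X]) (S : ℂ[X]) :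
    eA P * chi P S = chi P (S.comp (X - Polynomial.C 2)) * eA P := by
  rw [chi_sub2]
  induction S using Polynomial.induction_on' with
  | add p q hp hq =>
    rw [chi_add, mul_add, hp, hq, map_add, add_mul]
  | monomial n a =>
    rw [chi, Polynomial.aeval_monomial, Polynomial.aeval_monomial,
      ← mul_assoc, ← Algebra.commutes a (eA P), mul_assoc, eA_pow, ← mul_assoc]

lemma rel_ef (P : ℂ[X]) : eA P * fA P = chi P (P.comp (X - Polynomial.C 1)) := by
  have h := RingQuot.mkAlgHom_rel ℂ (ARel.ef (P := P))
  rw [map_mul] at h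
  rw [← Polynomial.aeval_algHom_apply] at h
  rw [map_sub, map_one] at h
  rw [chi, Polynomial.aeval_comp, map_sub, Polynomial.aeval_X, Polynomial.aeval_C, map_one]
  exact h

-- ### form lemmas

section Form
variable {P : ℂ[X]} (Φ : InvForm P)

lemma B_zero_left (v : AP P) : Φ.B 0 v = 0 := by
  have h := Φ.add_left 0 0 v
  rw [add_zero] at h
  exact add_eq_left.mp h.symm

lemma B_add_right (u v w : AP P) : Φ.B u (v + w) = Φ.B u v + Φ.B u w := by
  rw [Φ.conj_symm u (v + w), Φ.add_left, map_add, ← Φ.conj_symm, ← Φ.conj_symm]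

lemma B_smul_right (c : ℂ) (u v : AP P) :
    Φ.B u (c • v) = (starRingEnd ℂ) c * Φ.B u v := by
  rw [Φ.conj_symm u (c • v), Φ.smul_left, map_mul, ← Φ.conj_symm]

lemma B_sub_left (u v w : AP P) : Φ.B (u - v) w = Φ.B u w - Φ.B v w := by
  have h : u - v = u + (-1:ℂ) • v := by module
  rw [h, Φ.add_left, Φ.smul_left]
  ring

lemma B_step (u v : AP P) : Φ.B u (v * hA P) = - Φ.B (hA P * u) v := by
  rw [Φ.conj_symm u (v * hA P), Φ.h_right, map_neg, ← Φ.conj_symm]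

lemma B_move (n : ℕ) : ∀ u v : AP P,
    Φ.B u (v * hA P ^ n) = (-1)^n * Φ.B (hA P ^ n * u) v := by
  induction n with
  | zero => intro u v; simp
  | succ n ih =>
    intro u v
    rw [pow_succ, ← mul_assoc, B_step, ih]
    rw [← mul_assoc, ← pow_succ]
    ring

lemma chi_monomial (n : ℕ) (a : ℂ) :
    chi P (Polynomial.monomial n a) = a • hA P ^ n := by
  rw [chi, Polynomial.aeval_monomial, Algebra.algebraMap_eq_smul_one, smul_mul_assoc, one_mul]

lemma chi_Xpow (n : ℕ) : chi P ((X : ℂ[X]) ^ n) = hA P ^ n := by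
  rw [chi, map_pow, Polynomial.aeval_X]

lemma B_one (V Q : ℂ[X]) : Φ.B (chi P Q) (chi P V) = Φ.B (chi P (Q * Sig V)) 1 := by
  induction V using Polynomial.induction_on' with
  | add p q hp hq =>
    rw [chi_add, B_add_right, hp, hq, Sig_add, mul_add, chi_add, Φ.add_left]
  | monomial n a =>
    rw [chi_monomial, B_smul_right, Sig_monomial]
    rw [show hA P ^ n = 1 * hA P ^ n from (one_mul _).symm, B_move]
    rw [show Q * (Polynomial.C ((-1)^n * (starRingEnd ℂ) a) * X ^ n)
        = Polynomial.C ((-1)^n * (starRingEnd ℂ) a) * (X ^ n * Q) by ring]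
    simp only [chi_mul, chi_C, chi_Xpow, smul_mul_assoc, one_mul]
    rw [Φ.smul_left]
    ring

lemma B_conj1 (V : ℂ[X]) : Φ.B 1 (chi P V) = Φ.B (chi P (Sig V)) 1 := by
  have h := B_one Φ V 1
  rw [chi_one, one_mul] at h
  exact h

lemma t_sig (W : ℂ[X]) :
    Φ.B (chi P (Sig W)) 1 = (starRingEnd ℂ) (Φ.B (chi P W) 1) := by
  rw [← B_conj1]
  exact Φ.conj_symm 1 (chi P W)

lemma B_norm_nonneg (hU : ∀ u : AP P, u ≠ 0 → ∃ r : ℝ, 0 < r ∧ Φ.B u u = r) (u : AP P) :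
    ∃ r : ℝ, 0 ≤ r ∧ Φ.B u u = r := by
  rcases eq_or_ne u 0 with h0 | h0
  · exact ⟨0, le_rfl, by rw [h0, B_zero_left, Complex.ofReal_zero]⟩
  · obtain ⟨r, hr0, hr⟩ := hU u h0
    exact ⟨r, hr0.le, hr⟩

lemma B_Wp (S : ℂ[X]) :
    Φ.B (chi P (P.comp (X - Polynomial.C 1) * S.comp (X - Polynomial.C 2) * Sig S)) 1
    = - Φ.B (chi P S * fA P) (chi P S * fA P) := by
  have h2 : eA P * (chi P S * fA P)
      = chi P (P.comp (X - Polynomial.C 1) * S.comp (X - Polynomial.C 2)) := by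
    rw [← mul_assoc, eA_chi, mul_assoc, rel_ef, ← chi_mul, mul_comm]
  have h1 := Φ.e_left (chi P S * fA P) (chi P S)
  rw [h2] at h1
  have h3 := B_one Φ S (P.comp (X - Polynomial.C 1) * S.comp (X - Polynomial.C 2))
  rw [← h3, h1]

end Form

-- ### analysis lemmas

lemma lower_bound (W : ℂ[X]) (hdeg : 0 < W.degree)
    (hne : ∀ s : ℝ, W.eval (Complex.I * s) ≠ 0) :
    ∃ c₀ : ℝ, 0 < c₀ ∧ ∀ s : ℝ, c₀ ≤ ‖W.eval (Complex.I * s)‖ := by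
  set f : ℝ → ℝ := fun s => ‖W.eval (Complex.I * s)‖ with hf
  have hcm : Continuous fun s : ℝ => Complex.I * (s : ℂ) :=
    continuous_const.mul Complex.continuous_ofReal
  have hfc : Continuous f :=
    continuous_norm.comp (W.continuous.comp hcm)
  have hnorm : Filter.Tendsto (fun s : ℝ => ‖Complex.I * (s:ℂ)‖) Filter.atTop Filter.atTop := by
    have : (fun s : ℝ => ‖Complex.I * (s:ℂ)‖) = fun s : ℝ => |s| := by
      funext s
      rw [norm_mul, Complex.norm_I, one_mul, Complex.norm_real, Real.norm_eq_abs]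
    rw [this]
    exact Filter.tendsto_abs_atTop_atTop
  have hnormb : Filter.Tendsto (fun s : ℝ => ‖Complex.I * (s:ℂ)‖) Filter.atBot Filter.atTop := by
    have : (fun s : ℝ => ‖Complex.I * (s:ℂ)‖) = fun s : ℝ => |s| := by
      funext s
      rw [norm_mul, Complex.norm_I, one_mul, Complex.norm_real, Real.norm_eq_abs]
    rw [this]
    exact Filter.tendsto_abs_atBot_atTop
  have htop : Filter.Tendsto f Filter.atTop Filter.atTop := by
    have := W.tendsto_norm_atTop hdeg hnorm
    simpa [hf] using this
  have hbot : Filter.Tendsto f Filter.atBot Filter.atTop := by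
    have := W.tendsto_norm_atTop hdeg hnormb
    simpa [hf] using this
  obtain ⟨R₁, hR₁⟩ := (htop.eventually_ge_atTop 1).exists_forall_of_atTop
  obtain ⟨R₂, hR₂⟩ := (hbot.eventually_ge_atTop 1).exists_forall_of_atBot
  have hKc : IsCompact (Set.Icc (min R₂ 0) (max R₁ 0)) := isCompact_Icc
  have hKne : (Set.Icc (min R₂ 0) (max R₁ 0)).Nonempty :=
    Set.nonempty_Icc.mpr (le_trans (min_le_right _ _) (le_max_right _ _))
  obtain ⟨s₀, hs₀K, hs₀min⟩ := hKc.exists_isMinOn hKne hfc.continuousOn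
  have hm : 0 < f s₀ := norm_pos_iff.mpr (hne s₀)
  refine ⟨min (f s₀) 1, lt_min hm one_pos, ?_⟩
  intro s
  rcases le_or_gt s (max R₁ 0) with h1 | h1
  · rcases le_or_gt (min R₂ 0) s with h2 | h2
    · exact le_trans (min_le_left _ _) (hs₀min ⟨h2, h1⟩)
    · have : s ≤ R₂ := le_of_lt (lt_of_lt_of_le h2 (min_le_left _ _))
      exact le_trans (min_le_right _ _) (hR₂ s this)
  · have : R₁ ≤ s := le_of_lt (lt_of_le_of_lt (le_max_left _ _) h1)
    exact le_trans (min_le_right _ _) (hR₁ s this)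

lemma re_lower {z : ℂ} (hz : z ≠ 0) {a : ℝ} (ha0 : 0 < a) (hapi : a < Real.pi/2)
    (harg : |z.arg| < a) {c₀ : ℝ} (hc : c₀ ≤ ‖z‖) (hc0 : 0 < c₀) :
    Real.cos a * c₀ ≤ z.re := by
  have hpi : a ≤ Real.pi := by linarith [Real.pi_pos]
  have h1 : Real.cos a ≤ Real.cos |z.arg| :=
    Real.cos_le_cos_of_nonneg_of_le_pi (abs_nonneg _) hpi harg.le
  rw [Real.cos_abs] at h1
  have hcospos : 0 < Real.cos a :=
    Real.cos_pos_of_mem_Ioo ⟨by linarith, hapi⟩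
  have habs : 0 < ‖z‖ := lt_of_lt_of_le hc0 hc
  have hre : z.re = ‖z‖ * Real.cos z.arg := by
    rw [Complex.cos_arg hz]
    field_simp
  rw [hre]
  nlinarith


lemma chi_sub (P : ℂ[X]) (S T : ℂ[X]) : chi P (S - T) = chi P S - chi P T := by
  rw [chi, chi, chi, map_sub]


end Aux

/-- if `P` (of degree `≥ 1`) is real and positive on the imaginary axis,
`P(2x−1) ∈ M`, and `1/P(2x−1)` has a good approximation, then the regular bimodule `𝒜(P)`
is not unitarizable. -/
theorem stmt16 (P : ℂ[X]) (hdeg : 1 ≤ P.natDegree)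
    (hpos : ∀ t : ℝ, ∃ r : ℝ, 0 < r ∧ P.eval (Complex.I * t) = (r : ℂ))
    (hM : P.comp (2 * X - 1) ∈ MM)
    (hgood : GoodApprox (P.comp (2 * X - 1))) :
    ¬ Unitarizable P := by
  rintro ⟨Φ, hU⟩
  obtain ⟨a, ha0, hapi, happ⟩ := hgood
  obtain ⟨F, hFM, hba, -⟩ := happ 1 one_pos
  set G : ℂ[X] := P.comp (2 * X - 1) with hG
  have hFline : ∀ s : ℝ, ∃ r : ℝ, 0 ≤ r ∧ F.eval (((1/2:ℝ):ℂ) + Complex.I * s) = r := by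
    intro s
    exact hFM.2 (((1/2:ℝ):ℂ) + Complex.I * s) (by simp)
  obtain ⟨S, hS⟩ := halfline_factor F hFline
  set Wp : ℂ[X] := P.comp (X - Polynomial.C 1) * S.comp (X - Polynomial.C 2) * Sig S with hWpdef
  have hWpeval : ∀ x : ℂ, Wp.eval x = (G * F).eval (2⁻¹ * x) := by
    intro x
    rw [hWpdef, Polynomial.eval_mul, Polynomial.eval_mul]
    have h1 : (S.comp (X - Polynomial.C 2)).eval x * (Sig S).eval x
        = F.eval (2⁻¹ * x) := by
      have := congrArg (fun T : ℂ[X] => Polynomial.eval x T) hS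
      simpa [Polynomial.eval_mul, Polynomial.eval_comp] using this
    rw [mul_assoc, h1, Polynomial.eval_mul]
    congr 1
    rw [hG, Polynomial.eval_comp, Polynomial.eval_comp]
    congr 1
    simp only [Polynomial.eval_mul, Polynomial.eval_sub, Polynomial.eval_ofNat,
      Polynomial.eval_one, Polynomial.eval_X, Polynomial.eval_C]
    ring
  have haxis_re : ∀ s : ℝ, (Complex.I * (s:ℂ)).re = 0 := by intro s; simp
  have hGF : ∀ s : ℝ,
      (G*F).eval (Complex.I * s) ≠ 0 ∧ |((G*F).eval (Complex.I * s)).arg| < a := by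
    intro s; exact hba _ (haxis_re s)
  have hGF0 : (G*F) ≠ 0 := by
    intro h0
    have h1 := (hGF 0).1
    rw [h0] at h1; simp at h1
  have hGne : G ≠ 0 := fun h => hGF0 (by rw [h, zero_mul])
  have hFne : F ≠ 0 := fun h => hGF0 (by rw [h, mul_zero])
  have hdegG : 1 ≤ G.natDegree := by
    rw [hG, Polynomial.natDegree_comp]
    have h2 : (2 * X - 1 : ℂ[X]).natDegree = 1 := by compute_degree!
    rw [h2, mul_one]
    exact hdeg
  have hdegGF : 0 < (G*F).degree := by
    apply Polynomial.natDegree_pos_iff_degree_pos.mp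
    rw [Polynomial.natDegree_mul hGne hFne]
    omega
  obtain ⟨c₀, hc₀, hlow⟩ := lower_bound (G*F) hdegGF (fun s => (hGF s).1)
  set c : ℝ := Real.cos a * c₀ with hc
  have hcpos : 0 < c :=
    mul_pos (Real.cos_pos_of_mem_Ioo ⟨by linarith [Real.pi_pos], hapi⟩) hc₀
  have hWpax : ∀ s : ℝ, Wp.eval (Complex.I * s) = (G*F).eval (Complex.I * ((s/2 : ℝ):ℂ)) := by
    intro s
    rw [hWpeval]
    congr 1
    push_cast
    ring
  have hre : ∀ s : ℝ, c ≤ (Wp.eval (Complex.I * s)).re := by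
    intro s
    rw [hWpax s]
    exact re_lower (hGF (s/2)).1 ha0 hapi (hGF (s/2)).2 (hlow (s/2)) hc₀
  set V : ℂ[X] := Wp + Sig Wp - Polynomial.C ((2*c : ℝ) : ℂ) with hV
  have hVax : ∀ s : ℝ, ∃ r : ℝ, 0 ≤ r ∧ V.eval (Complex.I * s) = r := by
    intro s
    have hsig : (Sig Wp).eval (Complex.I * s) = (starRingEnd ℂ) (Wp.eval (Complex.I * s)) := by
      rw [Sig_eval]
      congr 2
      simp [Complex.ext_iff]
    refine ⟨2 * (Wp.eval (Complex.I * s)).re - 2*c, by linarith [hre s], ?_⟩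
    rw [hV, Polynomial.eval_sub, Polynomial.eval_add, Polynomial.eval_C, hsig,
      Complex.add_conj]
    push_cast
    ring
  obtain ⟨Q, hQ⟩ := axis_factor V hVax
  have hVpos : ∃ r : ℝ, 0 ≤ r ∧ Φ.B (chi P V) 1 = r := by
    have e : Φ.B (chi P V) 1 = Φ.B (chi P Q) (chi P Q) := by rw [hQ, ← B_one]
    obtain ⟨r, hr0, hr⟩ := B_norm_nonneg Φ hU (chi P Q)
    exact ⟨r, hr0, by rw [e, hr]⟩
  obtain ⟨r₂, hr₂0, hr₂⟩ := B_norm_nonneg Φ hU (chi P S * fA P)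
  have hneg : Φ.B (chi P Wp) 1 = -(r₂ : ℂ) := by
    rw [hWpdef, B_Wp, hr₂]
  have hsigW : Φ.B (chi P (Sig Wp)) 1 = -(r₂:ℂ) := by
    rw [t_sig, hneg]
    simp
  obtain ⟨r₁, hr₁0, hr₁⟩ := hU 1 (one_ne_zero_AP P hdeg)
  obtain ⟨rV, hrV0, hrV⟩ := hVpos
  have hexp : Φ.B (chi P V) 1
      = Φ.B (chi P Wp) 1 + Φ.B (chi P (Sig Wp)) 1 - ((2*c:ℝ):ℂ) * Φ.B 1 1 := by
    rw [hV, chi_sub, chi_add, chi_C, B_sub_left, Φ.add_left, Φ.smul_left]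
  rw [hrV, hneg, hsigW, hr₁] at hexp
  have hfin : rV = -r₂ + -r₂ - (2*c) * r₁ := by exact_mod_cast hexp
  nlinarith

end
end

section
/- Let P₁, ..., P_k ∈ M and suppose each of 1/P₁, ..., 1/P_k has a good approximation. Then 1/(P₁·P₂·...·P_k) has a good approximation. -/
open Polynomial
open scoped Classical

noncomputable section

open Filter Complex

lemma MM_one : (1 : ℂ[X]) ∈ MM :=
  ⟨one_ne_zero, fun x _ => ⟨1, by norm_num⟩⟩

lemma MM_mul {G H : ℂ[X]} (hG : G ∈ MM) (hH : H ∈ MM) : G * H ∈ MM := by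
  refine ⟨mul_ne_zero hG.1 hH.1, fun x hx => ?_⟩
  obtain ⟨r, hr0, hr⟩ := hG.2 x hx
  obtain ⟨s, hs0, hs⟩ := hH.2 x hx
  exact ⟨r * s, mul_nonneg hr0 hs0, by simp [hr, hs]⟩

lemma arg_mul_of_abs_lt {z w : ℂ} (hz : z ≠ 0) (hw : w ≠ 0)
    (h : |z.arg| + |w.arg| < Real.pi) : (z * w).arg = z.arg + w.arg := by
  apply Complex.arg_mul hz hw
  constructor
  · have : |z.arg + w.arg| < Real.pi := lt_of_le_of_lt (abs_add_le _ _) h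
    linarith [abs_lt.mp this |>.1]
  · have : |z.arg + w.arg| < Real.pi := lt_of_le_of_lt (abs_add_le _ _) h
    linarith [abs_lt.mp this |>.2]

lemma tendsto_inv_ofReal_atBot :
    Tendsto (fun t : ℝ => ((t : ℂ))⁻¹) atBot (nhds 0) := by
  have h1 : Tendsto (fun t : ℝ => t⁻¹) atBot (nhds 0) := by
    have h := (tendsto_inv_atTop_zero (𝕜 := ℝ)).comp tendsto_neg_atBot_atTop
    have h2 : Tendsto (fun t : ℝ => -((-t)⁻¹)) atBot (nhds (-0)) := h.neg
    rw [neg_zero] at h2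
    exact h2.congr fun t => by rw [inv_neg, neg_neg]
  have h3 := (Complex.continuous_ofReal.tendsto 0).comp h1
  rw [Complex.ofReal_zero] at h3
  exact h3.congr fun t => by simp [Function.comp]

lemma tendsto_inv_ofReal_atTop :
    Tendsto (fun t : ℝ => ((t : ℂ))⁻¹) atTop (nhds 0) := by
  have h3 := (Complex.continuous_ofReal.tendsto 0).comp (tendsto_inv_atTop_zero (𝕜 := ℝ))
  rw [Complex.ofReal_zero] at h3
  exact h3.congr fun t => by simp [Function.comp]

lemma tendsto_eval_div (U : ℂ[X]) {n : ℕ} (hn : U.natDegree ≤ n) {l : Filter ℝ}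
    (hl : Tendsto (fun t : ℝ => ((t : ℂ))⁻¹) l (nhds 0)) (h0 : ∀ᶠ t in l, t ≠ 0) :
    Tendsto (fun t : ℝ => U.eval (t : ℂ) / (t : ℂ) ^ n) l (nhds (U.coeff n)) := by
  have key : Tendsto (fun t : ℝ => ∑ j ∈ Finset.range (n + 1),
      U.coeff j * ((t : ℂ)⁻¹) ^ (n - j)) l
      (nhds (∑ j ∈ Finset.range (n + 1), U.coeff j * (0 : ℂ) ^ (n - j))) := by
    exact tendsto_finset_sum _ fun j _ => tendsto_const_nhds.mul (hl.pow _)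
  have hsum : (∑ j ∈ Finset.range (n + 1), U.coeff j * (0 : ℂ) ^ (n - j)) = U.coeff n := by
    rw [Finset.sum_eq_single n]
    · simp
    · intro j hj hjn
      have hnj : n - j ≠ 0 := by
        have := Finset.mem_range.mp hj
        omega
      simp [zero_pow hnj]
    · intro h; exact absurd (Finset.self_mem_range_succ n) h
  rw [hsum] at key
  refine key.congr' ?_
  filter_upwards [h0] with t ht
  have htC : (t : ℂ) ≠ 0 := by exact_mod_cast ht
  rw [Polynomial.eval_eq_sum_range' (Nat.lt_succ_of_le hn), Finset.sum_div]
  refine Finset.sum_congr rfl fun j hj => ?_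
  have hjn : j ≤ n := Nat.lt_succ_iff.mp (Finset.mem_range.mp hj)
  rw [mul_div_assoc]
  congr 1
  rw [inv_pow, eq_div_iff (pow_ne_zero _ htC), inv_mul_eq_div, div_eq_iff (pow_ne_zero _ htC),
    ← pow_add]
  congr 1
  omega

/-- Tail lemma: for `Q ∈ MM`, the argument of `Q` on the imaginary axis is eventually small. -/
lemma tail_small {Q : ℂ[X]} (hQ : Q ∈ MM) {δ : ℝ} (hδ : 0 < δ) :
    ∃ T : ℝ, 0 < T ∧ ∀ x : ℂ, x.re = 0 → T ≤ ‖x‖ → |(Q.eval x).arg| < δ := by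
  classical
  set n := Q.natDegree with hn
  set c := Q.leadingCoeff with hc
  set ℓ : ℂ := c * Complex.I ^ n with hℓ
  have hcne : c ≠ 0 := leadingCoeff_ne_zero.mpr hQ.1
  have hℓne : ℓ ≠ 0 := mul_ne_zero hcne (pow_ne_zero _ Complex.I_ne_zero)
  -- line polynomial
  have hInd : ((C (2⁻¹ : ℂ) + C Complex.I * X : ℂ[X])).natDegree = 1 := by compute_degree!
  have hIax : ((C Complex.I * X : ℂ[X])).natDegree = 1 := natDegree_C_mul_X _ Complex.I_ne_zero
  set V : ℂ[X] := Q.comp (C (2⁻¹ : ℂ) + C Complex.I * X) with hV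
  set U : ℂ[X] := Q.comp (C Complex.I * X) with hU
  have hVdeg : V.natDegree = n := by rw [hV, natDegree_comp, hInd, mul_one]
  have hUdeg : U.natDegree = n := by rw [hU, natDegree_comp, hIax, mul_one]
  have hVlead : V.coeff n = ℓ := by
    rw [← hVdeg, Polynomial.coeff_natDegree, hV, leadingCoeff_comp (by rw [hInd]; omega)]
    have h1 : ((C (2⁻¹ : ℂ) + C Complex.I * X : ℂ[X])).leadingCoeff = Complex.I := by
      rw [Polynomial.leadingCoeff, hInd]
      simp
    rw [h1]
  have hUlead : U.coeff n = ℓ := by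
    rw [← hUdeg, Polynomial.coeff_natDegree, hU, leadingCoeff_comp (by rw [hIax]; omega)]
    have h1 : ((C Complex.I * X : ℂ[X])).leadingCoeff = Complex.I := by
      rw [Polynomial.leadingCoeff, hIax]
      simp
    rw [h1]
  have hVeval : ∀ y : ℝ, V.eval (y : ℂ) = Q.eval (2⁻¹ + Complex.I * y) := by
    intro y; rw [hV, eval_comp]; simp
  have hUeval : ∀ t : ℝ, U.eval (t : ℂ) = Q.eval (Complex.I * t) := by
    intro t; rw [hU, eval_comp]; simp
  -- values on the line are nonneg reals
  have hline : ∀ y : ℝ, ∃ r : ℝ, 0 ≤ r ∧ Q.eval (2⁻¹ + Complex.I * y) = (r : ℂ) := by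
    intro y
    refine hQ.2 _ ?_
    have : ((2⁻¹ : ℂ) + Complex.I * (y : ℂ)).re = 2⁻¹ := by simp
    rw [this]; norm_num
  -- limits on the line
  have hVtop : Tendsto (fun y : ℝ => V.eval (y : ℂ) / (y : ℂ) ^ n) atTop (nhds ℓ) := by
    rw [← hVlead]
    exact tendsto_eval_div V hVdeg.le tendsto_inv_ofReal_atTop
      (eventually_atTop.mpr ⟨1, fun t ht => by linarith⟩)
  have hVbot : Tendsto (fun y : ℝ => V.eval (y : ℂ) / (y : ℂ) ^ n) atBot (nhds ℓ) := by
    rw [← hVlead]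
    exact tendsto_eval_div V hVdeg.le tendsto_inv_ofReal_atBot
      (eventually_atBot.mpr ⟨-1, fun t ht => by linarith⟩)
  -- values form
  have hval : ∀ y : ℝ, y ≠ 0 →
      V.eval (y : ℂ) / (y : ℂ) ^ n = (((Classical.choose (hline y)) / y ^ n : ℝ) : ℂ) := by
    intro y hy
    have := (Classical.choose_spec (hline y)).2
    rw [hVeval]
    conv_lhs => rw [this]
    push_cast
    ring
  have him : ℓ.im = 0 := by
    have h1 : Tendsto (fun y : ℝ => (V.eval (y : ℂ) / (y : ℂ) ^ n).im) atTop (nhds ℓ.im) :=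
      (Complex.continuous_im.tendsto ℓ).comp hVtop
    have h2 : Tendsto (fun _ : ℝ => (0 : ℝ)) atTop (nhds ℓ.im) := by
      refine h1.congr' ?_
      filter_upwards [eventually_ge_atTop (1 : ℝ)] with y hy
      rw [hval y (by linarith)]
      exact Complex.ofReal_im _
    exact tendsto_nhds_unique h2 tendsto_const_nhds
  have hre_nonneg : 0 ≤ ℓ.re := by
    have h1 : Tendsto (fun y : ℝ => (V.eval (y : ℂ) / (y : ℂ) ^ n).re) atTop (nhds ℓ.re) :=
      (Complex.continuous_re.tendsto ℓ).comp hVtop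
    refine ge_of_tendsto h1 ?_
    filter_upwards [eventually_ge_atTop (1 : ℝ)] with y hy
    rw [hval y (by linarith)]
    simp only [Complex.ofReal_re]
    have := (Classical.choose_spec (hline y)).1
    positivity
  have hneven : Even n := by
    by_contra hodd
    have hodd' : Odd n := Nat.odd_iff.mpr (Nat.not_even_iff.mp hodd)
    have h1 : Tendsto (fun y : ℝ => (V.eval (y : ℂ) / (y : ℂ) ^ n).re) atBot (nhds ℓ.re) :=
      (Complex.continuous_re.tendsto ℓ).comp hVbot
    have hre_nonpos : ℓ.re ≤ 0 := by
      refine le_of_tendsto h1 ?_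
      filter_upwards [eventually_le_atBot (-1 : ℝ)] with y hy
      rw [hval y (by linarith)]
      simp only [Complex.ofReal_re]
      have h2 := (Classical.choose_spec (hline y)).1
      have h3 : y ^ n < 0 := hodd'.pow_neg (by linarith)
      exact div_nonpos_of_nonneg_of_nonpos h2 h3.le
    have : ℓ = 0 := by
      apply Complex.ext <;> simp [him]
      linarith
    exact hℓne this
  have hre_pos : 0 < ℓ.re := by
    rcases hre_nonneg.lt_or_eq with h | h
    · exact h
    · exfalso; apply hℓne; apply Complex.ext <;> simp [him, ← h]
  -- axis limits
  have hUtop : Tendsto (fun t : ℝ => U.eval (t : ℂ) / (t : ℂ) ^ n) atTop (nhds ℓ) := by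
    rw [← hUlead]
    exact tendsto_eval_div U hUdeg.le tendsto_inv_ofReal_atTop
      (eventually_atTop.mpr ⟨1, fun t ht => by linarith⟩)
  have hUbot : Tendsto (fun t : ℝ => U.eval (t : ℂ) / (t : ℂ) ^ n) atBot (nhds ℓ) := by
    rw [← hUlead]
    exact tendsto_eval_div U hUdeg.le tendsto_inv_ofReal_atBot
      (eventually_atBot.mpr ⟨-1, fun t ht => by linarith⟩)
  have hargℓ : ℓ.arg = 0 := by
    have : ℓ = ((ℓ.re : ℝ) : ℂ) := by apply Complex.ext <;> simp [him]
    rw [this]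
    exact Complex.arg_ofReal_of_nonneg hre_nonneg
  have hslit : ℓ ∈ Complex.slitPlane := Complex.mem_slitPlane_iff.mpr (Or.inl hre_pos)
  have hargcont := (Complex.continuousAt_arg hslit).tendsto
  -- argument equality for t ≠ 0
  have hargeq : ∀ t : ℝ, t ≠ 0 →
      (Q.eval (Complex.I * t)).arg = (U.eval (t : ℂ) / (t : ℂ) ^ n).arg := by
    intro t ht
    have htn : (0 : ℝ) < t ^ n := hneven.pow_pos ht
    have htC : ((t : ℂ)) ^ n ≠ 0 := pow_ne_zero _ (by exact_mod_cast ht)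
    have : Q.eval (Complex.I * t) = ((t ^ n : ℝ) : ℂ) * (U.eval (t : ℂ) / (t : ℂ) ^ n) := by
      rw [← hUeval]
      push_cast
      field_simp
    rw [this, Complex.arg_real_mul _ htn]
  have hsmalltop : ∀ᶠ t : ℝ in atTop, |(Q.eval (Complex.I * t)).arg| < δ := by
    have h1 : Tendsto (fun t : ℝ => (U.eval (t : ℂ) / (t : ℂ) ^ n).arg) atTop (nhds 0) := by
      rw [← hargℓ]; exact hargcont.comp hUtop
    have h2 := (Metric.tendsto_nhds.mp h1) δ hδ
    filter_upwards [h2, eventually_ge_atTop (1 : ℝ)] with t ht h1t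
    rw [hargeq t (by linarith)]
    simpa [Real.dist_eq] using ht
  have hsmallbot : ∀ᶠ t : ℝ in atBot, |(Q.eval (Complex.I * t)).arg| < δ := by
    have h1 : Tendsto (fun t : ℝ => (U.eval (t : ℂ) / (t : ℂ) ^ n).arg) atBot (nhds 0) := by
      rw [← hargℓ]; exact hargcont.comp hUbot
    have h2 := (Metric.tendsto_nhds.mp h1) δ hδ
    filter_upwards [h2, eventually_le_atBot (-1 : ℝ)] with t ht h1t
    rw [hargeq t (by linarith)]
    simpa [Real.dist_eq] using ht
  obtain ⟨T₁, hT₁⟩ := eventually_atTop.mp hsmalltop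
  obtain ⟨T₂, hT₂⟩ := eventually_atBot.mp hsmallbot
  refine ⟨max T₁ (max (-T₂) 1), lt_of_lt_of_le one_pos (le_max_of_le_right (le_max_right _ _)),
    fun x hx hTx => ?_⟩
  have hxeq : x = Complex.I * (x.im : ℝ) := by
    apply Complex.ext <;> simp [hx]
  have habs : ‖x‖ = |x.im| := by
    rw [hxeq]
    simp
  rw [hxeq]
  rcases le_or_gt 0 x.im with h | h
  · apply hT₁
    have : |x.im| = x.im := abs_of_nonneg h
    rw [habs, this] at hTx
    exact le_trans (le_max_left _ _) hTx
  · apply hT₂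
    have : |x.im| = -x.im := abs_of_neg h
    rw [habs, this] at hTx
    have : -T₂ ≤ -x.im := le_trans (le_max_of_le_right (le_max_left _ _)) hTx
    linarith

lemma GoodApprox.one : GoodApprox 1 := by
  refine ⟨Real.pi / 4, by positivity, by linarith [Real.pi_pos], fun ε hε => ?_⟩
  refine ⟨1, MM_one, fun x hx => ?_, fun x hx _ => ?_⟩
  · simp
    positivity
  · simp
    exact hε

lemma GoodApprox.mul {G H : ℂ[X]} (hG : G ∈ MM) (hH : H ∈ MM)
    (hg : GoodApprox G) (hh : GoodApprox H) : GoodApprox (G * H) := by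
  obtain ⟨a₁, ha₁0, ha₁, hFg⟩ := hg
  obtain ⟨a₂, ha₂0, ha₂, hFh⟩ := hh
  set A := max a₁ a₂ with hA
  have hA0 : 0 < A := lt_of_lt_of_le ha₁0 (le_max_left _ _)
  have hAπ : A < Real.pi / 2 := max_lt ha₁ ha₂
  set η := (Real.pi / 2 - A) / 2 with hη
  have hη0 : 0 < η := by simp [hη]; linarith
  have hηπ : η < Real.pi / 4 := by simp [hη]; linarith
  refine ⟨A + η, by linarith, by simp [hη]; linarith, fun ε hε => ?_⟩
  set ε₂ := min (ε / 2) η with hε₂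
  have hε₂0 : 0 < ε₂ := lt_min (by linarith) hη0
  obtain ⟨F₂, hF₂M, hB₂, hS₂⟩ := hFh ε₂ hε₂0
  obtain ⟨T, hT0, hTail⟩ := tail_small (MM_mul hH hF₂M) hε₂0
  set ε₁ := min (min (ε / 2) η) (1 / T) with hε₁
  have hε₁0 : 0 < ε₁ := lt_min (lt_min (by linarith) hη0) (by positivity)
  obtain ⟨F₁, hF₁M, hB₁, hS₁⟩ := hFg ε₁ hε₁0
  refine ⟨F₁ * F₂, MM_mul hF₁M hF₂M, ?_, ?_⟩
  all_goals
    have heq : ∀ x : ℂ, (G * H * (F₁ * F₂)).eval x = (G * F₁).eval x * (H * F₂).eval x := by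
      intro x
      rw [← Polynomial.eval_mul]
      ring_nf
  · -- BoundedArg
    intro x hx
    obtain ⟨hz₁, harg₁⟩ := hB₁ x hx
    obtain ⟨hz₂, harg₂⟩ := hB₂ x hx
    have hbound : |((G * F₁).eval x).arg| + |((H * F₂).eval x).arg| < A + η := by
      rcases lt_or_ge (‖x‖) (1 / ε₁) with hcase | hcase
      · have h1 := hS₁ x hx hcase
        have h2 : ε₁ ≤ η := le_trans (min_le_left _ _) (min_le_right _ _)
        have h3 : a₂ ≤ A := le_max_right _ _
        linarith
      · have hTle : T ≤ 1 / ε₁ := by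
          have h4 : ε₁ ≤ 1 / T := min_le_right _ _
          have h5 : ε₁ * T ≤ 1 := (le_div_iff₀ hT0).mp h4
          exact (le_div_iff₀ hε₁0).mpr (by nlinarith)
        have h5 : T ≤ ‖x‖ := le_trans hTle hcase
        have h6 := hTail x hx h5
        have h7 : ε₂ ≤ η := min_le_right _ _
        have h8 : a₁ ≤ A := le_max_left _ _
        linarith
    have hπ : |((G * F₁).eval x).arg| + |((H * F₂).eval x).arg| < Real.pi := by
      have := Real.pi_pos
      calc _ < A + η := hbound
        _ < Real.pi := by simp [hη]; linarith
    constructor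
    · rw [heq x]; exact mul_ne_zero hz₁ hz₂
    · rw [heq x, arg_mul_of_abs_lt hz₁ hz₂ hπ]
      exact lt_of_le_of_lt (abs_add_le _ _) hbound
  · -- SmallArg
    intro x hx hxa
    obtain ⟨hz₁, harg₁⟩ := hB₁ x hx
    obtain ⟨hz₂, harg₂⟩ := hB₂ x hx
    have hε₁ε : ε₁ ≤ ε / 2 := le_trans (min_le_left _ _) (min_le_left _ _)
    have hε₂ε : ε₂ ≤ ε / 2 := min_le_left _ _
    have hxa₁ : ‖x‖ < 1 / ε₁ :=
      lt_of_lt_of_le hxa (one_div_le_one_div_of_le hε₁0 (by linarith))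
    have hxa₂ : ‖x‖ < 1 / ε₂ :=
      lt_of_lt_of_le hxa (one_div_le_one_div_of_le hε₂0 (by linarith))
    have h1 := hS₁ x hx hxa₁
    have h2 := hS₂ x hx hxa₂
    have hη₁ : ε₁ ≤ η := le_trans (min_le_left _ _) (min_le_right _ _)
    have hη₂ : ε₂ ≤ η := min_le_right _ _
    have hπ : |((G * F₁).eval x).arg| + |((H * F₂).eval x).arg| < Real.pi := by
      have := Real.pi_pos
      linarith
    rw [heq x, arg_mul_of_abs_lt hz₁ hz₂ hπ]
    calc |((G * F₁).eval x).arg + ((H * F₂).eval x).arg|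
        ≤ |((G * F₁).eval x).arg| + |((H * F₂).eval x).arg| := abs_add_le _ _
      _ < ε := by linarith

/-- if `P₁, …, P_k ∈ M` and each `1/Pᵢ` has a good approximation, then
`1/(P₁ ⋯ P_k)` has a good approximation. -/
theorem stmt17 (k : ℕ) (Ps : Fin k → ℂ[X])
    (hM : ∀ i, Ps i ∈ MM) (hgood : ∀ i, GoodApprox (Ps i)) :
    GoodApprox (∏ i, Ps i) := by
  have key : (∏ i, Ps i) ∈ MM ∧ GoodApprox (∏ i, Ps i) :=
    Finset.prod_induction Ps (fun p => p ∈ MM ∧ GoodApprox p)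
      (fun p q hp hq => ⟨MM_mul hp.1 hq.1, GoodApprox.mul hp.1 hq.1 hp.2 hq.2⟩)
      ⟨MM_one, GoodApprox.one⟩ (fun i _ => ⟨hM i, hgood i⟩)
  exact key.2


end
end
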